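/- Suppose strata sizes N_h > 0 with N = Σ N_h, intended sample size m > 0, response probabilities p_h ∈ (0,1], and per-stratum 'yes' probabilities q_h ∈ [0,1]. Define σ²_PS = (1/(N m)) Σ_h N_h q_h (1−q_h) (r/p_h) with r = Σ_h (N_h/N) p_h, and σ²_ERR = (1/(N m)) Σ_h N_h q_h (1−q_h) (p_h/p_h) = (1/(N m)) Σ_h N_h q_h (1−q_h). If q_h = q is constant across strata, then σ²_ERR ≤ σ²_PS. -/

import Mathlib

theorem ERR_le_PS_constant_q
    (H : ℕ) (hH : 1 ≤ H)
    (N : Fin H → ℝ) (hN : ∀ h, 0 < N h)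
    (Ntot : ℝ) (hNtot : Ntot = ∑ h, N h)
    (m : ℝ) (hm : 0 < m)
    (p : Fin H → ℝ) (hp0 : ∀ h, 0 < p h) (hp1 : ∀ h, p h ≤ 1)
    (q : Fin H → ℝ) (hq0 : ∀ h, 0 ≤ q h) (hq1 : ∀ h, q h ≤ 1)
    (r : ℝ) (hr : r = ∑ h, (N h / Ntot) * p h)
    (σPS σERR : ℝ)
    (hPS : σPS = (1 / (Ntot * m)) * ∑ h, N h * (q h * (1 - q h)) * (r / p h))
    (hERR : σERR = (1 / (Ntot * m)) * ∑ h, N h * (q h * (1 - q h)))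
    (qc : ℝ) (hqc : ∀ h, q h = qc) :
    σERR ≤ σPS := by
  haveI : Nonempty (Fin H) := ⟨⟨0, by omega⟩⟩
  have hNtot0 : 0 < Ntot := by
    rw [hNtot]
    exact Finset.sum_pos (fun h _ => hN h) Finset.univ_nonempty
  -- Cauchy-Schwarz
  have cs : (∑ h, N h) ^ 2 ≤ (∑ h, N h * p h) * (∑ h, N h / p h) := by
    have := Finset.sum_mul_sq_le_sq_mul_sq Finset.univ
      (fun h => Real.sqrt (N h * p h)) (fun h => Real.sqrt (N h / p h))
    have e1 : ∀ h : Fin H, Real.sqrt (N h * p h) * Real.sqrt (N h / p h) = N h := by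
      intro h
      rw [← Real.sqrt_mul (mul_nonneg (hN h).le (hp0 h).le)]
      have : N h * p h * (N h / p h) = N h ^ 2 := by
        field_simp [(hp0 h).ne']
      rw [this, Real.sqrt_sq (hN h).le]
    have e2 : ∀ h : Fin H, Real.sqrt (N h * p h) ^ 2 = N h * p h := fun h =>
      Real.sq_sqrt (mul_nonneg (hN h).le (hp0 h).le)
    have e3 : ∀ h : Fin H, Real.sqrt (N h / p h) ^ 2 = N h / p h := fun h =>
      Real.sq_sqrt (div_nonneg (hN h).le (hp0 h).le)
    calc (∑ h, N h) ^ 2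
        = (∑ h, Real.sqrt (N h * p h) * Real.sqrt (N h / p h)) ^ 2 := by
          simp only [e1]
      _ ≤ (∑ h, Real.sqrt (N h * p h) ^ 2) * ∑ h, Real.sqrt (N h / p h) ^ 2 := this
      _ = _ := by simp only [e2, e3]
  have hr' : r = (∑ h, N h * p h) / Ntot := by
    rw [hr, Finset.sum_div]
    refine Finset.sum_congr rfl fun h _ => by ring
  have key : Ntot ≤ r * ∑ h, N h / p h := by
    rw [hr', div_mul_eq_mul_div, le_div_iff₀ hNtot0]
    calc Ntot * Ntot = (∑ h, N h) ^ 2 := by rw [hNtot]; ring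
      _ ≤ _ := cs
  have hc : 0 ≤ qc * (1 - qc) := by
    have := hq0 ⟨0, by omega⟩
    have := hq1 ⟨0, by omega⟩
    rw [hqc ⟨0, by omega⟩] at *
    nlinarith
  have hsum1 : (∑ h, N h * (q h * (1 - q h)) * (r / p h))
      = qc * (1 - qc) * (r * ∑ h, N h / p h) := by
    rw [Finset.mul_sum, Finset.mul_sum]
    refine Finset.sum_congr rfl fun h _ => ?_
    rw [hqc h]; field_simp
  have hsum2 : (∑ h, N h * (q h * (1 - q h))) = qc * (1 - qc) * Ntot := by
    rw [hNtot, Finset.mul_sum]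
    refine Finset.sum_congr rfl fun h _ => ?_
    rw [hqc h]; ring
  rw [hPS, hERR, hsum1, hsum2]
  have hpos : 0 < 1 / (Ntot * m) := by positivity
  apply mul_le_mul_of_nonneg_left _ hpos.le
  exact mul_le_mul_of_nonneg_left key hc
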